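/- The genus 2 curve Y² = X⁶ + 3X⁴ − 6X² − 8 has no rational points: there is no pair (X, Y) ∈ ℚ² with Y² = X⁶ + 3X⁴ − 6X² − 8. -/

import Mathlib

-- basic helpers
lemma sq_of_coprime' {a b c : ℤ} (h : IsCoprime a b) (heq : a * b = c ^ 2) (ha : 0 ≤ a) :
    ∃ d : ℤ, a = d ^ 2 := by
  obtain ⟨d, hd | hd⟩ := Int.sq_of_isCoprime h heq
  · exact ⟨d, hd⟩
  · have h0 : a = 0 := by nlinarith [sq_nonneg d]
    exact ⟨0, by simp [h0]⟩

lemma gcd_eq_one_of_forall {A B : ℤ}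
    (h : ∀ p : ℕ, p.Prime → (p:ℤ) ∣ A → (p:ℤ) ∣ B → False) : Int.gcd A B = 1 := by
  by_contra hg
  rcases Nat.eq_zero_or_pos (Int.gcd A B) with h0 | hpos
  · obtain ⟨hA0, hB0⟩ := Int.gcd_eq_zero_iff.mp h0
    exact h 2 Nat.prime_two (by simp [hA0]) (by simp [hB0])
  · have h2 : 2 ≤ Int.gcd A B := by omega
    obtain ⟨p, hp, hpd⟩ := Nat.exists_prime_and_dvd (by omega : Int.gcd A B ≠ 1)
    have hA : (p:ℤ) ∣ A := dvd_trans (Int.natCast_dvd_natCast.mpr hpd) (Int.gcd_dvd_left A B)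
    have hB : (p:ℤ) ∣ B := dvd_trans (Int.natCast_dvd_natCast.mpr hpd) (Int.gcd_dvd_right A B)
    exact h p hp hA hB

lemma zmod3_sq_add_sq {s t n : ℤ} (h : s^2 + t^2 = 3 * n) : (3:ℤ) ∣ s ∧ (3:ℤ) ∣ t := by
  have hc : ((s:ZMod 3))^2 + ((t:ZMod 3))^2 = 0 := by
    have := congrArg (Int.cast : ℤ → ZMod 3) h
    push_cast at this
    rw [this]
    have h3 : (3 : ZMod 3) = 0 := by decide
    rw [h3, zero_mul]
  have key : ∀ a b : ZMod 3, a^2 + b^2 = 0 → a = 0 ∧ b = 0 := by decide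
  obtain ⟨h1, h2⟩ := key _ _ hc
  exact ⟨(ZMod.intCast_zmod_eq_zero_iff_dvd s 3).mp h1,
         (ZMod.intCast_zmod_eq_zero_iff_dvd t 3).mp h2⟩

lemma prime_not_dvd_one {p : ℕ} (hp : p.Prime) (h : (p:ℤ) ∣ 1) : False := by
  have h1 := Int.le_of_dvd one_pos h
  have h2 := hp.two_le
  omega

lemma odd_not_two_dvd {x : ℤ} (hodd : Odd x) (hd : (2:ℤ) ∣ x) : False := by
  obtain ⟨k, hk⟩ := hd
  obtain ⟨j, hj⟩ := hodd
  omega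

lemma abs_le_sq (s : ℤ) : |s| ≤ s ^ 2 := by
  rcases eq_or_ne s 0 with rfl | hs
  · simp
  · have h1 : 1 ≤ |s| := Int.one_le_abs hs
    calc |s| = 1 * |s| := (one_mul _).symm
      _ ≤ |s| * |s| := mul_le_mul_of_nonneg_right h1 (abs_nonneg s)
      _ = s ^ 2 := by rw [← abs_mul, abs_mul_self s]; ring

lemma four_sq {a b c d e : ℤ}
    (cab : IsCoprime a b) (cac : IsCoprime a c) (cad : IsCoprime a d)
    (cbc : IsCoprime b c) (cbd : IsCoprime b d) (ccd : IsCoprime c d)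
    (ha : 0 ≤ a) (hb : 0 ≤ b) (hc : 0 ≤ c) (hd : 0 ≤ d)
    (h : a * b * c * d = e ^ 2) :
    ∃ p q r s : ℤ, a = p ^ 2 ∧ b = q ^ 2 ∧ c = r ^ 2 ∧ d = s ^ 2 := by
  obtain ⟨p, hp⟩ := sq_of_coprime' (cab.mul_right (cac.mul_right cad))
    (show a * (b * (c * d)) = e ^ 2 by linear_combination h) ha
  obtain ⟨q, hq⟩ := sq_of_coprime' (cab.symm.mul_right (cbc.mul_right cbd))
    (show b * (a * (c * d)) = e ^ 2 by linear_combination h) hb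
  obtain ⟨r, hr⟩ := sq_of_coprime' (cac.symm.mul_right (cbc.symm.mul_right ccd))
    (show c * (a * (b * d)) = e ^ 2 by linear_combination h) hc
  obtain ⟨s, hs⟩ := sq_of_coprime' (cad.symm.mul_right (cbd.symm.mul_right ccd.symm))
    (show d * (a * (b * c)) = e ^ 2 by linear_combination h) hd
  exact ⟨p, q, r, s, hp, hq, hr, hs⟩

set_option maxHeartbeats 1000000 in
lemma descent_aux (Nb : ℕ) : ∀ x y z : ℤ, 0 ≤ z → x.natAbs < Nb → y ≠ 0 →
    Int.gcd x y = 1 → x ^ 4 = z ^ 2 + 9 * y ^ 4 → False := by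
  induction Nb with
  | zero => intro x y z _ h _ _ _; omega
  | succ n ih =>
    intro x y z hz0 hxn hy hgcd heqZ
    have hxodd : Odd x := by
      by_contra hx
      rw [Int.not_odd_iff_even] at hx
      obtain ⟨k, hk⟩ := hx
      rcases Int.even_or_odd y with hyy | hyy
      · obtain ⟨j, hj⟩ := hyy
        have h2 : (2:ℤ) ∣ (Int.gcd x y : ℤ) := Int.dvd_coe_gcd ⟨k, by omega⟩ ⟨j, by omega⟩
        rw [hgcd] at h2; norm_num at h2
      · obtain ⟨j, hj⟩ := hyy
        subst hk hj
        have hc := congrArg (Int.cast : ℤ → ZMod 16) heqZ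
        push_cast at hc
        revert hc
        generalize (k : ZMod 16) = K
        generalize (z : ZMod 16) = W
        generalize (j : ZMod 16) = J
        revert K W J
        decide
    have hyeven : Even y := by
      by_contra hyy
      rw [Int.not_even_iff_odd] at hyy
      obtain ⟨j, hj⟩ := hyy
      obtain ⟨i, hi⟩ := hxodd
      subst hj hi
      have hc := congrArg (Int.cast : ℤ → ZMod 16) heqZ
      push_cast at hc
      revert hc
      generalize (i : ZMod 16) = I
      generalize (z : ZMod 16) = W
      generalize (j : ZMod 16) = J
      revert I W J
      decide
    obtain ⟨y₀, hy₀⟩ := hyeven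
    have hy₀0 : y₀ ≠ 0 := fun h => hy (by simp [hy₀, h])
    have h3x : ¬ (3:ℤ) ∣ x := by
      rintro ⟨x₁, hx₁⟩
      have h3y : ¬ (3:ℤ) ∣ y := by
        intro h3y
        have h3g : (3:ℤ) ∣ (Int.gcd x y : ℤ) := Int.dvd_coe_gcd ⟨x₁, hx₁⟩ h3y
        rw [hgcd] at h3g; norm_num at h3g
      have h3Z2 : (3:ℤ) ∣ z ^ 2 :=
        ⟨27 * x₁^4 - 3 * y^4, by linear_combination -heqZ + (x+3*x₁)*(x^2+9*x₁^2)*hx₁⟩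
      obtain ⟨z₁, hz₁⟩ := Int.prime_three.dvd_of_dvd_pow h3Z2
      have h9 : (9:ℤ) * (z₁^2 + y^4) = 9 * (9 * x₁^4) := by
        linear_combination -heqZ - (z+3*z₁)*hz₁ + (x+3*x₁)*(x^2+9*x₁^2)*hx₁
      have hkey : z₁^2 + y^4 = 9 * x₁^4 := mul_left_cancel₀ (by norm_num) h9
      have hynz : ((y : ZMod 3)) ≠ 0 := fun h => h3y ((ZMod.intCast_zmod_eq_zero_iff_dvd y 3).mp h)
      have hc := congrArg (Int.cast : ℤ → ZMod 3) hkey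
      push_cast at hc
      revert hc hynz
      generalize (z₁ : ZMod 3) = A
      generalize (y : ZMod 3) = B
      generalize (x₁ : ZMod 3) = C
      revert A B C
      decide
    have hZodd : Odd z := by
      by_contra hze
      rw [Int.not_odd_iff_even] at hze
      obtain ⟨c, hc'⟩ := hze
      obtain ⟨i, hi⟩ := hxodd
      have hcast := congrArg (Int.cast : ℤ → ZMod 2) heqZ
      rw [hi, hc', hy₀] at hcast
      push_cast at hcast
      revert hcast
      generalize (i : ZMod 2) = I
      generalize (c : ZMod 2) = W
      generalize (y₀ : ZMod 2) = J
      revert I W J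
      decide
    have hx0 : x ≠ 0 := by rintro rfl; exact (by norm_num : ¬ Odd (0:ℤ)) hxodd
    have hx2pos : 0 < x ^ 2 := lt_of_le_of_ne (sq_nonneg x) (Ne.symm (pow_ne_zero 2 hx0))
    have hy4pos : 0 < y ^ 4 := by positivity
    have hZlt : z < x ^ 2 := by
      by_contra hlt
      push_neg at hlt
      have h1 : x^2 * x^2 ≤ z * z := mul_le_mul hlt hlt (sq_nonneg x) hz0
      have h2 : x^4 ≤ z^2 := by
        calc x^4 = x^2*x^2 := by ring
          _ ≤ z*z := h1
          _ = z^2 := by ring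
      linarith [hy4pos]
    obtain ⟨A, hA⟩ := (hxodd.pow (n := 2)).sub_odd hZodd
    obtain ⟨B, hB⟩ := (hxodd.pow (n := 2)).add_odd hZodd
    have e1 : x^2 - z = 2*A := by linarith [hA]
    have e2 : x^2 + z = 2*B := by linarith [hB]
    have eAB : A + B = x^2 := by linarith [e1, e2]
    have h4 : (2*A) * (2*B) = 9 * y^4 := by rw [← e1, ← e2]; linear_combination heqZ
    have hABsq : A * B = (6*y₀^2)^2 := by
      have h4' : (4:ℤ) * (A*B) = 4 * ((6*y₀^2)^2) := by
        linear_combination h4 + 9*(y + (y₀+y₀))*(y^2 + (y₀+y₀)^2)*hy₀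
      exact mul_left_cancel₀ (by norm_num) h4'
    have hApos : 0 < A := by linarith [e1, hZlt]
    have hBpos : 0 < B := by linarith [e2, hz0, hx2pos]
    have hABgcd : Int.gcd A B = 1 := gcd_eq_one_of_forall (by
      intro p hp hpA hpB
      have hpP : Prime (p:ℤ) := Nat.prime_iff_prime_int.mp hp
      have hpx : (p:ℤ) ∣ x := hpP.dvd_of_dvd_pow (show (p:ℤ) ∣ x^2 from eAB ▸ dvd_add hpA hpB)
      have hpy : (p:ℤ) ∣ y := by
        have h1 : (p:ℤ) ∣ (6*y₀^2)^2 := hABsq ▸ Dvd.dvd.mul_right hpA B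
        have h2 : (p:ℤ) ∣ 6*y₀^2 := hpP.dvd_of_dvd_pow h1
        rcases hpP.dvd_mul.mp h2 with h3 | h3
        · exfalso
          have h3' : (p:ℤ) ∣ 2*3 := by norm_num; exact h3
          rcases hpP.dvd_mul.mp h3' with h5 | h5
          · have hp2 : p = 2 := by
              have hle := Int.le_of_dvd (by norm_num) h5
              have := hp.two_le
              omega
            subst hp2
            exact odd_not_two_dvd hxodd hpx
          · have hp3 : p = 3 := by
              have h6 : (p:ℕ) ∣ 3 := by exact_mod_cast h5
              exact (Nat.prime_dvd_prime_iff_eq hp Nat.prime_three).mp h6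
            subst hp3
            exact h3x hpx
        · have h5 : (p:ℤ) ∣ y₀ := hpP.dvd_of_dvd_pow h3
          rw [hy₀]
          exact dvd_add h5 h5
      have hpg : (p:ℤ) ∣ (Int.gcd x y : ℤ) := Int.dvd_coe_gcd hpx hpy
      rw [hgcd] at hpg
      exact prime_not_dvd_one hp hpg)
    have hABcop : IsCoprime A B := Int.isCoprime_iff_gcd_eq_one.mpr hABgcd
    obtain ⟨α0, hα0⟩ := sq_of_coprime' hABcop hABsq (le_of_lt hApos)
    obtain ⟨β0, hβ0⟩ := sq_of_coprime' hABcop.symm (show B * A = (6*y₀^2)^2 by linear_combination hABsq) (le_of_lt hBpos)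
    set α := |α0| with hαdef
    set β := |β0| with hβdef
    have hA2 : A = α ^ 2 := by rw [hαdef, sq_abs]; exact hα0
    have hB2 : B = β ^ 2 := by rw [hβdef, sq_abs]; exact hβ0
    have hαnn : 0 ≤ α := abs_nonneg α0
    have hβnn : 0 ≤ β := abs_nonneg β0
    have hαpos : 0 < α := by
      rcases lt_or_eq_of_le hαnn with h | h
      · exact h
      · rw [← h] at hA2; simp at hA2; omega
    have hβpos : 0 < β := by
      rcases lt_or_eq_of_le hβnn with h | h
      · exact h
      · rw [← h] at hB2; simp at hB2; omega
    have hxx : α^2 + β^2 = x^2 := by rw [← hA2, ← hB2]; exact eAB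
    have hpyth : PythagoreanTriple α β x := by
      have h : α*α + β*β = x*x := by linear_combination hxx
      exact h
    have hαβgcd : Int.gcd α β = 1 := by
      have hc : IsCoprime (α^2) (β^2) := by rw [← hA2, ← hB2]; exact hABcop
      exact Int.isCoprime_iff_gcd_eq_one.mp
        ((hc.of_isCoprime_of_dvd_left (dvd_pow_self α (by norm_num))).of_isCoprime_of_dvd_right
          (dvd_pow_self β (by norm_num)))
    have hαβ : α * β = 6 * y₀^2 := by
      have h1 : (α*β - 6*y₀^2) * (α*β + 6*y₀^2) = 0 := by
        linear_combination hABsq - β^2*hA2 - A*hB2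
      rcases mul_eq_zero.mp h1 with h2 | h2
      · linarith [h2]
      · exfalso
        have hy₀sq : 0 < y₀^2 := by positivity
        have hαβ0 : 0 ≤ α * β := mul_nonneg hαnn hβnn
        linarith
    obtain ⟨mm, nn, hmn1, hmn2, hmn3, hmn4⟩ := PythagoreanTriple.coprime_classification.mp ⟨hpyth, hαβgcd⟩
    have hprod2 : 2*mm*nn*(mm^2 - nn^2) = 6*y₀^2 := by
      rcases hmn1 with ⟨ha', hb'⟩ | ⟨ha', hb'⟩
      · rw [ha', hb'] at hαβ; linear_combination hαβ
      · rw [ha', hb'] at hαβ; linear_combination hαβ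
    have hmnpos : 0 < mm*nn ∧ 0 < mm^2 - nn^2 := by
      rcases hmn1 with ⟨ha', hb'⟩ | ⟨ha', hb'⟩
      · have h1 : 0 < mm^2 - nn^2 := ha' ▸ hαpos
        have h2 : 0 < 2*mm*nn := hb' ▸ hβpos
        exact ⟨by linarith, h1⟩
      · have h1 : 0 < mm^2 - nn^2 := hb' ▸ hβpos
        have h2 : 0 < 2*mm*nn := ha' ▸ hαpos
        exact ⟨by linarith, h1⟩
    set M := |mm| with hMdef
    set N := |nn| with hNdef
    have hMN : M * N = mm * nn := by rw [hMdef, hNdef, ← abs_mul]; exact abs_of_pos hmnpos.1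
    have hM2 : M^2 = mm^2 := sq_abs mm
    have hN2 : N^2 = nn^2 := sq_abs nn
    have hn0 : nn ≠ 0 := by rintro rfl; simp at hmnpos
    have hm0 : mm ≠ 0 := by rintro rfl; simp at hmnpos
    have hN0 : 0 < N := abs_pos.mpr hn0
    have hM0 : 0 < M := abs_pos.mpr hm0
    have hMgtN : N < M := by
      by_contra hcon
      push_neg at hcon
      have hle := pow_le_pow_left₀ (abs_nonneg mm) hcon 2
      rw [hM2, hN2] at hle
      linarith [hmnpos.2]
    have hgcdMN : Int.gcd M N = 1 := by
      have h : Int.gcd M N = Int.gcd mm nn := by simp [Int.gcd, hMdef, hNdef, Int.natAbs_abs]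
      rw [h]; exact hmn3
    have hpar : Odd (M + N) := by
      rw [Int.odd_iff]
      rcases abs_choice mm with h1 | h1 <;> rcases abs_choice nn with h2 | h2 <;>
        rcases hmn4 with ⟨h3, h4⟩ | ⟨h3, h4⟩ <;> omega
    have hprodMN : M * N * (M - N) * (M + N) = 3 * y₀^2 := by
      have hc2 : mm*nn*(mm^2-nn^2) = 3*y₀^2 := by
        have h2 : (2:ℤ) * (mm*nn*(mm^2-nn^2)) = 2 * (3*y₀^2) := by linear_combination hprod2
        exact mul_left_cancel₀ two_ne_zero h2
      calc M * N * (M - N) * (M + N) = M*N*(M^2 - N^2) := by ring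
        _ = mm*nn*(mm^2-nn^2) := by rw [hMN, hM2, hN2]
        _ = 3*y₀^2 := hc2
    have cMN : IsCoprime M N := Int.isCoprime_iff_gcd_eq_one.mpr hgcdMN
    have cM_MpN : IsCoprime M (M + N) := by
      have h := cMN.add_mul_left_right 1
      rwa [mul_one, add_comm] at h
    have cM_MmN : IsCoprime M (M - N) := by
      have h := (cMN.neg_right).add_mul_left_right 1
      rwa [mul_one, ← sub_eq_neg_add] at h
    have cN_MpN : IsCoprime N (M + N) := by
      have h := cMN.symm.add_mul_left_right 1
      rwa [mul_one] at h
    have cN_MmN : IsCoprime N (M - N) := by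
      have h := cMN.symm.add_mul_left_right (-1)
      rwa [mul_neg_one, ← sub_eq_add_neg] at h
    have hgcdpm : Int.gcd (M + N) (M - N) = 1 := gcd_eq_one_of_forall (by
      intro p hp h1 h2
      have hpP : Prime (p:ℤ) := Nat.prime_iff_prime_int.mp hp
      have hp2 : p ≠ 2 := by
        rintro rfl
        exact odd_not_two_dvd hpar (by exact_mod_cast h1)
      have hpM : (p:ℤ) ∣ M := by
        have h4 := dvd_add h1 h2
        rw [show (M+N)+(M-N) = 2*M from by ring] at h4
        rcases hpP.dvd_mul.mp h4 with h5 | h5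
        · exact absurd ((Nat.prime_dvd_prime_iff_eq hp Nat.prime_two).mp (by exact_mod_cast h5)) hp2
        · exact h5
      have hpN : (p:ℤ) ∣ N := by
        have h4 := dvd_sub h1 h2
        rw [show (M+N)-(M-N) = 2*N from by ring] at h4
        rcases hpP.dvd_mul.mp h4 with h5 | h5
        · exact absurd ((Nat.prime_dvd_prime_iff_eq hp Nat.prime_two).mp (by exact_mod_cast h5)) hp2
        · exact h5
      have hpg := Int.dvd_coe_gcd hpM hpN
      rw [hgcdMN] at hpg
      exact prime_not_dvd_one hp hpg)
    have cMpN_MmN : IsCoprime (M+N) (M-N) := Int.isCoprime_iff_gcd_eq_one.mpr hgcdpm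
    have hMpN : 0 < M + N := by linarith
    have hMmN : 0 < M - N := by linarith
    have hxabs : |x| = M^2 + N^2 := by
      rcases hmn2 with h | h
      · rw [h, abs_of_nonneg (by positivity), hM2, hN2]
      · rw [h, abs_neg, abs_of_nonneg (by positivity), hM2, hN2]
    have hbound : ∀ s : ℤ, s^2 < M^2 + N^2 → s.natAbs < n := by
      intro s hs
      have h1 : |s| ≤ s^2 := abs_le_sq s
      have h2 : |s| < |x| := by rw [hxabs]; linarith
      have h3 : s.natAbs < x.natAbs := by
        rw [Int.abs_eq_natAbs, Int.abs_eq_natAbs] at h2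
        exact_mod_cast h2
      omega
    have hNge : 1 ≤ N := hN0
    have hMge : 2 ≤ M := by omega
    have hMltsum : M < M^2 + N^2 := by
      have e1 : (0:ℤ) ≤ M*(M-2) := mul_nonneg (by omega) (by omega)
      have e1' : M*(M-2) = M^2 - 2*M := by ring
      have e2 : (0:ℤ) ≤ N^2 := sq_nonneg N
      linarith
    have hMpNlt : M + N < M^2 + N^2 := by
      have e1' : (0:ℤ) ≤ M*(M-2) := mul_nonneg (by omega) (by omega)
      have e1'' : M*(M-2) = M^2 - 2*M := by ring
      have e2' : (0:ℤ) ≤ N*(N-1) := mul_nonneg (by omega) (by omega)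
      have e2'' : N*(N-1) = N^2 - N := by ring
      linarith
    have h3d : (3:ℤ) ∣ M * N * (M - N) * (M + N) := ⟨y₀^2, hprodMN⟩
    rcases Int.prime_three.dvd_mul.mp h3d with h3a | h3MpN
    · rcases Int.prime_three.dvd_mul.mp h3a with h3b | h3MmN
      · rcases Int.prime_three.dvd_mul.mp h3b with h3M | h3N
        · -- 3 ∣ M : contradiction
          obtain ⟨K, hK⟩ := h3M
          have hKpos : 0 < K := by linarith
          have cK_N : IsCoprime K N := cMN.of_isCoprime_of_dvd_left ⟨3, by rw [hK]; ring⟩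
          have cK_MmN : IsCoprime K (M-N) := cM_MmN.of_isCoprime_of_dvd_left ⟨3, by rw [hK]; ring⟩
          have cK_MpN : IsCoprime K (M+N) := cM_MpN.of_isCoprime_of_dvd_left ⟨3, by rw [hK]; ring⟩
          have hprod4 : K * N * (M-N) * (M+N) = y₀^2 := by
            have h9 : (3:ℤ) * (K * N * (M-N) * (M+N)) = 3 * y₀^2 := by
              linear_combination hprodMN - (N*(M-N)*(M+N)) * hK
            exact mul_left_cancel₀ (by norm_num) h9
          obtain ⟨r, q, u, t, hr, hq, hu, ht⟩ := four_sq cK_N cK_MmN cK_MpN cN_MmN cN_MpN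
            cMpN_MmN.symm (le_of_lt hKpos) (le_of_lt hN0) (le_of_lt hMmN) (le_of_lt hMpN) hprod4
          have hsum : t^2 + u^2 = 3 * (2*K) := by linear_combination -ht - hu + 2*hK
          obtain ⟨h3t, h3u⟩ := zmod3_sq_add_sq hsum
          obtain ⟨t₁, ht₁⟩ := h3t
          obtain ⟨u₁, hu₁⟩ := h3u
          have h3N2 : (3:ℤ) ∣ 2*N :=
            ⟨3*t₁^2 - 3*u₁^2, by linear_combination ht - hu + (t+3*t₁)*ht₁ - (u+3*u₁)*hu₁⟩
          have h3N : (3:ℤ) ∣ N := by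
            rcases Int.prime_three.dvd_mul.mp h3N2 with h | h
            · norm_num at h
            · exact h
          have h3M' : (3:ℤ) ∣ M := ⟨K, hK⟩
          have hgg := Int.dvd_coe_gcd h3M' h3N
          rw [hgcdMN] at hgg
          exact prime_not_dvd_one Nat.prime_three (by exact_mod_cast hgg)
        · -- 3 ∣ N : descent
          obtain ⟨K, hK⟩ := h3N
          have hKpos : 0 < K := by linarith
          have cK_M : IsCoprime K M := cMN.symm.of_isCoprime_of_dvd_left ⟨3, by rw [hK]; ring⟩
          have cK_MmN : IsCoprime K (M-N) := cN_MmN.of_isCoprime_of_dvd_left ⟨3, by rw [hK]; ring⟩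
          have cK_MpN : IsCoprime K (M+N) := cN_MpN.of_isCoprime_of_dvd_left ⟨3, by rw [hK]; ring⟩
          have hprod4 : M * K * (M-N) * (M+N) = y₀^2 := by
            have h9 : (3:ℤ) * (M * K * (M-N) * (M+N)) = 3 * y₀^2 := by
              linear_combination hprodMN - (M*((M-N)*(M+N))) * hK
            exact mul_left_cancel₀ (by norm_num) h9
          obtain ⟨s, r, u, t, hs, hr, hu, ht⟩ := four_sq cK_M.symm cM_MmN cM_MpN cK_MmN cK_MpN
            cMpN_MmN.symm (le_of_lt hM0) (le_of_lt hKpos) (le_of_lt hMmN) (le_of_lt hMpN) hprod4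
          have e1' : s^4 = M^2 := by rw [hs]; ring
          have e2' : (t*u)^2 = M^2 - N^2 := by rw [mul_pow, ← ht, ← hu]; ring
          have e3' : N^2 = 9*r^4 := by rw [hK, hr]; ring
          have heqnew : s^4 = |t*u|^2 + 9*r^4 := by
            rw [sq_abs]
            rw [e1', e2', ← e3']
            ring
          have hgcdsr : Int.gcd s r = 1 := gcd_eq_one_of_forall (by
            intro p hp h1 h2
            have hpM : (p:ℤ) ∣ M := by rw [hs]; exact dvd_pow h1 two_ne_zero
            have hpN : (p:ℤ) ∣ N := by
              rw [hK, hr]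
              exact Dvd.dvd.mul_left (dvd_pow h2 two_ne_zero) 3
            have hg := Int.dvd_coe_gcd hpM hpN
            rw [hgcdMN] at hg
            exact prime_not_dvd_one hp hg)
          have hr0 : r ≠ 0 := by
            rintro rfl
            norm_num at hr
            omega
          have hslt : s.natAbs < n := hbound s (by rw [← hs]; exact hMltsum)
          exact ih s r |t*u| (abs_nonneg _) hslt hr0 hgcdsr heqnew
      · -- 3 ∣ M - N : descent
        obtain ⟨K, hK⟩ := h3MmN
        have hKpos : 0 < K := by linarith
        have cK_M : IsCoprime K M := cM_MmN.symm.of_isCoprime_of_dvd_left ⟨3, by rw [hK]; ring⟩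
        have cK_N : IsCoprime K N := cN_MmN.symm.of_isCoprime_of_dvd_left ⟨3, by rw [hK]; ring⟩
        have cK_MpN : IsCoprime K (M+N) := cMpN_MmN.symm.of_isCoprime_of_dvd_left ⟨3, by rw [hK]; ring⟩
        have hprod4 : M * N * (M+N) * K = y₀^2 := by
          have h9 : (3:ℤ) * (M * N * (M+N) * K) = 3 * y₀^2 := by
            linear_combination hprodMN - (M*N*(M+N)) * hK
          exact mul_left_cancel₀ (by norm_num) h9
        obtain ⟨s, t, u, r, hs, ht, hu, hr⟩ := four_sq cMN cM_MpN cK_M.symm cN_MpN cK_N.symm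
          cK_MpN.symm (le_of_lt hM0) (le_of_lt hN0) (le_of_lt hMpN) (le_of_lt hKpos) hprod4
        have h1' : u^4 = (M+N)^2 := by rw [hu]; ring
        have h2' : (2*s*t)^2 = 4*(M*N) := by rw [hs, ht]; ring
        have h3' : (M-N)^2 = 9*r^4 := by rw [hK, hr]; ring
        have heqnew : u^4 = |2*s*t|^2 + 9*r^4 := by
          rw [sq_abs]
          linear_combination h1' - h2' + h3'
        have hgcdur : Int.gcd u r = 1 := gcd_eq_one_of_forall (by
          intro p hp h1 h2
          have hpMpN : (p:ℤ) ∣ M+N := by rw [hu]; exact dvd_pow h1 two_ne_zero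
          have hpMmN : (p:ℤ) ∣ M-N := by
            rw [hK, hr]
            exact Dvd.dvd.mul_left (dvd_pow h2 two_ne_zero) 3
          have hg := Int.dvd_coe_gcd hpMpN hpMmN
          rw [hgcdpm] at hg
          exact prime_not_dvd_one hp hg)
        have hr0 : r ≠ 0 := by
          rintro rfl
          norm_num at hr
          omega
        have hult : u.natAbs < n := hbound u (by rw [← hu]; exact hMpNlt)
        exact ih u r |2*s*t| (abs_nonneg _) hult hr0 hgcdur heqnew
    · -- 3 ∣ M + N : contradiction
      obtain ⟨K, hK⟩ := h3MpN
      have hKpos : 0 < K := by linarith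
      have cK_M : IsCoprime K M := cM_MpN.symm.of_isCoprime_of_dvd_left ⟨3, by rw [hK]; ring⟩
      have cK_N : IsCoprime K N := cN_MpN.symm.of_isCoprime_of_dvd_left ⟨3, by rw [hK]; ring⟩
      have cK_MmN : IsCoprime K (M-N) := cMpN_MmN.of_isCoprime_of_dvd_left ⟨3, by rw [hK]; ring⟩
      have hprod4 : M * N * (M-N) * K = y₀^2 := by
        have h9 : (3:ℤ) * (M * N * (M-N) * K) = 3 * y₀^2 := by
          linear_combination hprodMN - (M*N*(M-N)) * hK
        exact mul_left_cancel₀ (by norm_num) h9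
      obtain ⟨s, t, u, r, hs, ht, hu, hr⟩ := four_sq cMN cM_MmN cK_M.symm cN_MmN cK_N.symm
        cK_MmN.symm (le_of_lt hM0) (le_of_lt hN0) (le_of_lt hMmN) (le_of_lt hKpos) hprod4
      have hsum : s^2 + t^2 = 3 * K := by linear_combination -hs - ht + hK
      obtain ⟨h3s, h3t⟩ := zmod3_sq_add_sq hsum
      have h3M' : (3:ℤ) ∣ M := by rw [hs]; exact dvd_pow h3s two_ne_zero
      have h3N' : (3:ℤ) ∣ N := by rw [ht]; exact dvd_pow h3t two_ne_zero
      have hgg := Int.dvd_coe_gcd h3M' h3N'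
      rw [hgcdMN] at hgg
      exact prime_not_dvd_one Nat.prime_three (by exact_mod_cast hgg)

lemma no_x4_9y4 {x y z : ℤ} (hy : y ≠ 0) (hgcd : Int.gcd x y = 1)
    (heq : x ^ 4 = z ^ 2 + 9 * y ^ 4) : False :=
  descent_aux (x.natAbs + 1) x y |z| (abs_nonneg z) (Nat.lt_succ_self _) hy hgcd
    (by rw [sq_abs]; exact heq)

lemma zmod3_two_sq_sub_sq {s t k : ℤ} (h : 2*s^2 - t^2 = 3 * k) : (3:ℤ) ∣ s ∧ (3:ℤ) ∣ t := by
  have hc : 2*((s:ZMod 3))^2 - ((t:ZMod 3))^2 = 0 := by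
    have := congrArg (Int.cast : ℤ → ZMod 3) h
    push_cast at this
    rw [this]
    have h3 : (3 : ZMod 3) = 0 := by decide
    rw [h3, zero_mul]
  have key : ∀ a b : ZMod 3, 2*a^2 - b^2 = 0 → a = 0 ∧ b = 0 := by decide
  obtain ⟨h1, h2⟩ := key _ _ hc
  exact ⟨(ZMod.intCast_zmod_eq_zero_iff_dvd s 3).mp h1,
         (ZMod.intCast_zmod_eq_zero_iff_dvd t 3).mp h2⟩

lemma three_dvd_sum_sq {a b : ℤ} (h : (3:ℤ) ∣ a^2 + b^2) : (3:ℤ) ∣ a ∧ (3:ℤ) ∣ b := by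
  obtain ⟨k, hk⟩ := h
  exact zmod3_sq_add_sq hk

lemma three_dvd_sub_sq {a b : ℤ} (h : (3:ℤ) ∣ a^2 - 2*b^2) : (3:ℤ) ∣ a ∧ (3:ℤ) ∣ b := by
  obtain ⟨k, hk⟩ := h
  obtain ⟨h1, h2⟩ := zmod3_two_sq_sub_sq (show 2*b^2 - a^2 = 3*(-k) by linarith)
  exact ⟨h2, h1⟩

lemma eq_three_of_dvd {p : ℕ} (hp : p.Prime) (h : (p:ℤ) ∣ 3) : p = 3 :=
  (Nat.prime_dvd_prime_iff_eq hp Nat.prime_three).mp (by exact_mod_cast h)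

lemma rat_int_of_sq {q : ℚ} {N : ℤ} (h : q ^ 2 = (N : ℚ)) : ∃ c : ℤ, q = (c : ℚ) := by
  have hden : ((q.den : ℚ)) ≠ 0 := Nat.cast_ne_zero.mpr q.den_ne_zero
  have h1 : (q.num : ℚ)^2 = (N:ℚ) * (q.den:ℚ)^2 := by
    have h2 : q * (q.den:ℚ) = (q.num:ℚ) := by
      exact_mod_cast Rat.mul_den_eq_num q
    rw [← h2, mul_pow, h]
  have h2 : q.num^2 = N * (q.den:ℤ)^2 := by exact_mod_cast h1
  have h3 : ((q.den:ℤ))^2 ∣ q.num^2 := ⟨N, by linarith⟩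
  have h4 : q.den^2 ∣ q.num.natAbs^2 := by
    have h4' := Int.natAbs_dvd_natAbs.mpr h3
    simpa [Int.natAbs_pow] using h4'
  have h5 : Nat.Coprime (q.den^2) (q.num.natAbs^2) := Nat.Coprime.pow 2 2 q.reduced.symm
  have h6 : q.den^2 = 1 := h5.eq_one_of_dvd h4
  have h7 : q.den = 1 := by
    rw [pow_two] at h6
    exact Nat.eq_one_of_mul_eq_one_right h6
  refine ⟨q.num, ?_⟩
  conv_lhs => rw [← Rat.num_div_den q]
  rw [h7]
  simp

set_option maxHeartbeats 1000000 in
lemma key_int (a b c : ℤ) (hb : 0 < b) (hgcd : Int.gcd a b = 1)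
    (heq : c^2 = a^6 + 3*a^4*b^2 - 6*a^2*b^4 - 8*b^6) : False := by
  have hfac : c^2 = (a^2+b^2) * ((a^2-2*b^2) * (a^2+4*b^2)) := by linear_combination heq
  have hb0 : b ≠ 0 := ne_of_gt hb
  have hb2 : (0:ℤ) < b^2 := pow_pos hb 2
  have hpab : ∀ p : ℕ, p.Prime → (p:ℤ) ∣ a → (p:ℤ) ∣ b → False := by
    intro p hp h1 h2
    have hg := Int.dvd_coe_gcd h1 h2
    rw [hgcd] at hg
    exact prime_not_dvd_one hp hg
  have h3ab : ¬ ((3:ℤ) ∣ a ∧ (3:ℤ) ∣ b) := by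
    rintro ⟨h1, h2⟩
    exact hpab 3 Nat.prime_three (by exact_mod_cast h1) (by exact_mod_cast h2)
  rcases Int.even_or_odd a with hae | hao
  · rcases Int.even_or_odd b with hbe | hbo
    · obtain ⟨i, hi⟩ := hae
      obtain ⟨j, hj⟩ := hbe
      exact hpab 2 Nat.prime_two ⟨i, by omega⟩ ⟨j, by omega⟩
    · obtain ⟨a₀, ha₀⟩ := hae
      rcases Int.even_or_odd a₀ with ha₀e | ha₀o
      · -- 4 ∣ a : ZMod 16 contradiction
        obtain ⟨a₁, ha₁⟩ := ha₀e
        obtain ⟨j, hj⟩ := hbo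
        have ha4 : a = 4*a₁ := by omega
        rw [ha4, hj] at hfac
        have hcast := congrArg (Int.cast : ℤ → ZMod 16) hfac
        push_cast at hcast
        revert hcast
        generalize (c : ZMod 16) = C
        generalize (a₁ : ZMod 16) = A
        generalize (j : ZMod 16) = J
        revert C A J
        decide
      · -- a = 2a₀ with a₀ odd, b odd
        obtain ⟨w, hw⟩ := (ha₀o.pow (n := 2)).add_odd (hbo.pow (n := 2))
        have e2 : a^2 - 2*b^2 = 2*(2*a₀^2 - b^2) := by rw [ha₀]; ring
        have e3 : a^2 + 4*b^2 = 8*w := by rw [ha₀]; linear_combination 4*hw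
        have hc16 : c^2 = 16 * ((a^2+b^2) * ((2*a₀^2 - b^2) * w)) := by
          rw [hfac, e2, e3]; ring
        obtain ⟨c₁, hc₁⟩ : (2:ℤ) ∣ c :=
          Int.prime_two.dvd_of_dvd_pow (n := 2)
            ⟨8 * ((a^2+b^2) * ((2*a₀^2 - b^2) * w)), by linear_combination hc16⟩
        have hq2 : c₁^2 = 4*((a^2+b^2)*((2*a₀^2-b^2)*w)) := by
          have hq1 : (4:ℤ)*(c₁^2) = 4*(4*((a^2+b^2)*((2*a₀^2-b^2)*w))) := by
            linear_combination hc16 - (c+2*c₁)*hc₁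
          exact mul_left_cancel₀ (by norm_num) hq1
        obtain ⟨c₂, hc₂⟩ : (2:ℤ) ∣ c₁ :=
          Int.prime_two.dvd_of_dvd_pow (n := 2)
            ⟨2*((a^2+b^2)*((2*a₀^2-b^2)*w)), by linear_combination hq2⟩
        have hq3 : (a^2+b^2)*((2*a₀^2-b^2)*w) = c₂^2 := by
          have hq4 : (4:ℤ)*(c₂^2) = 4*((a^2+b^2)*((2*a₀^2-b^2)*w)) := by
            linear_combination hq2 - (c₁+2*c₂)*hc₂
          exact (mul_left_cancel₀ (by norm_num) hq4).symm
        have cop1 : IsCoprime (a^2+b^2) (2*a₀^2-b^2) :=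
          Int.isCoprime_iff_gcd_eq_one.mpr (gcd_eq_one_of_forall (by
            intro p hp h1 h2
            have hpP : Prime (p:ℤ) := Nat.prime_iff_prime_int.mp hp
            have hsub : (p:ℤ) ∣ 3*b^2 := by
              have hd := dvd_sub h1 (Dvd.dvd.mul_left h2 2)
              rwa [show (a^2+b^2) - 2*(2*a₀^2-b^2) = 3*b^2 from by rw [ha₀]; ring] at hd
            rcases hpP.dvd_mul.mp hsub with h3 | h3
            · have hp3 := eq_three_of_dvd hp h3
              subst hp3
              exact h3ab (three_dvd_sum_sq (by exact_mod_cast h1))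
            · have hpb : (p:ℤ) ∣ b := hpP.dvd_of_dvd_pow h3
              have hpa : (p:ℤ) ∣ a := by
                have hd := dvd_sub h1 (Dvd.dvd.mul_right hpb b)
                rw [show (a^2+b^2) - b*b = a^2 from by ring] at hd
                exact hpP.dvd_of_dvd_pow hd
              exact hpab p hp hpa hpb))
        have cop2 : IsCoprime (a^2+b^2) w :=
          Int.isCoprime_iff_gcd_eq_one.mpr (gcd_eq_one_of_forall (by
            intro p hp h1 h2
            have hpP : Prime (p:ℤ) := Nat.prime_iff_prime_int.mp hp
            have hpw2 : (p:ℤ) ∣ a₀^2+b^2 := by rw [hw]; exact dvd_add h2 h2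
            have hsub : (p:ℤ) ∣ 3*a₀^2 := by
              have hd := dvd_sub h1 hpw2
              rwa [show (a^2+b^2) - (a₀^2+b^2) = 3*a₀^2 from by rw [ha₀]; ring] at hd
            rcases hpP.dvd_mul.mp hsub with h3 | h3
            · have hp3 := eq_three_of_dvd hp h3
              subst hp3
              exact h3ab (three_dvd_sum_sq (by exact_mod_cast h1))
            · have hpa₀ : (p:ℤ) ∣ a₀ := hpP.dvd_of_dvd_pow h3
              have hpa : (p:ℤ) ∣ a := by rw [ha₀]; exact dvd_add hpa₀ hpa₀
              have hpb : (p:ℤ) ∣ b := by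
                have hd := dvd_sub h1 (Dvd.dvd.mul_right (dvd_pow hpa two_ne_zero) 1)
                rw [show (a^2+b^2) - a^2*1 = b^2 from by ring] at hd
                exact hpP.dvd_of_dvd_pow hd
              exact hpab p hp hpa hpb))
        have cop3 : IsCoprime (2*a₀^2-b^2) w :=
          Int.isCoprime_iff_gcd_eq_one.mpr (gcd_eq_one_of_forall (by
            intro p hp h1 h2
            have hpP : Prime (p:ℤ) := Nat.prime_iff_prime_int.mp hp
            have hpw2 : (p:ℤ) ∣ a₀^2+b^2 := by rw [hw]; exact dvd_add h2 h2
            have hsub : (p:ℤ) ∣ 3*a₀^2 := by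
              have hd := dvd_add h1 hpw2
              rwa [show (2*a₀^2-b^2) + (a₀^2+b^2) = 3*a₀^2 from by ring] at hd
            rcases hpP.dvd_mul.mp hsub with h3 | h3
            · have hp3 := eq_three_of_dvd hp h3
              subst hp3
              obtain ⟨k, hk⟩ : (3:ℤ) ∣ 2*a₀^2-b^2 := by exact_mod_cast h1
              obtain ⟨hda₀, hdb⟩ := zmod3_two_sq_sub_sq hk
              exact h3ab ⟨by rw [ha₀]; exact dvd_add hda₀ hda₀, hdb⟩
            · have hpa₀ : (p:ℤ) ∣ a₀ := hpP.dvd_of_dvd_pow h3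
              have hpa : (p:ℤ) ∣ a := by rw [ha₀]; exact dvd_add hpa₀ hpa₀
              have hpb : (p:ℤ) ∣ b := by
                have hd := dvd_sub hpw2 (dvd_pow hpa₀ two_ne_zero)
                rw [show (a₀^2+b^2) - a₀^2 = b^2 from by ring] at hd
                exact hpP.dvd_of_dvd_pow hd
              exact hpab p hp hpa hpb))
        have hP1pos : (0:ℤ) < a^2+b^2 := by linarith [sq_nonneg a]
        have hwpos : (0:ℤ) < w := by linarith [sq_nonneg a₀, hw]
        have hmnn : (0:ℤ) ≤ 2*a₀^2-b^2 := by
          by_contra hcon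
          push_neg at hcon
          have hneg : (a^2+b^2) * ((2*a₀^2-b^2)*w) < 0 :=
            mul_neg_of_pos_of_neg hP1pos (mul_neg_of_neg_of_pos hcon hwpos)
          rw [hq3] at hneg
          exact absurd hneg (not_lt.mpr (sq_nonneg c₂))
        obtain ⟨s, hs⟩ := sq_of_coprime' (cop1.mul_right cop2) hq3 (le_of_lt hP1pos)
        obtain ⟨t, ht⟩ := sq_of_coprime' (cop1.symm.mul_right cop3)
          (show (2*a₀^2-b^2) * ((a^2+b^2)*w) = c₂^2 by linear_combination hq3) hmnn
        have hsum : s^2 + t^2 = 3*(2*a₀^2) := by linear_combination -hs - ht + (a+2*a₀)*ha₀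
        obtain ⟨h3s, h3t⟩ := zmod3_sq_add_sq hsum
        obtain ⟨s₁, hs₁⟩ := h3s
        obtain ⟨t₁, ht₁⟩ := h3t
        have h9 : (3:ℤ)*(2*a₀^2) = 3*(3*(s₁^2+t₁^2)) := by
          linear_combination -hsum + (s+3*s₁)*hs₁ + (t+3*t₁)*ht₁
        have h3a₀2 : (3:ℤ) ∣ 2*a₀^2 := ⟨s₁^2+t₁^2, mul_left_cancel₀ (by norm_num) h9⟩
        have h3a₀ : (3:ℤ) ∣ a₀ := by
          rcases Int.prime_three.dvd_mul.mp h3a₀2 with h | h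
          · norm_num at h
          · exact Int.prime_three.dvd_of_dvd_pow h
        obtain ⟨a₂, ha₂⟩ := h3a₀
        have h3b : (3:ℤ) ∣ b := by
          have hdb2 : (3:ℤ) ∣ b^2 :=
            ⟨6*a₂^2 - 3*t₁^2, by linear_combination -ht - (t+3*t₁)*ht₁ + 2*(a₀+3*a₂)*ha₂⟩
          exact Int.prime_three.dvd_of_dvd_pow hdb2
        have h3a : (3:ℤ) ∣ a := by rw [ha₀, ha₂]; exact ⟨2*a₂, by ring⟩
        exact h3ab ⟨h3a, h3b⟩
  · -- a odd : reduce to the quartic equation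
    have cop12 : IsCoprime (a^2+b^2) (a^2-2*b^2) :=
      Int.isCoprime_iff_gcd_eq_one.mpr (gcd_eq_one_of_forall (by
        intro p hp h1 h2
        have hpP : Prime (p:ℤ) := Nat.prime_iff_prime_int.mp hp
        have hsub : (p:ℤ) ∣ 3*b^2 := by
          have hd := dvd_sub h1 h2
          rwa [show (a^2+b^2) - (a^2-2*b^2) = 3*b^2 from by ring] at hd
        rcases hpP.dvd_mul.mp hsub with h3 | h3
        · have hp3 := eq_three_of_dvd hp h3
          subst hp3
          exact h3ab (three_dvd_sum_sq (by exact_mod_cast h1))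
        · have hpb : (p:ℤ) ∣ b := hpP.dvd_of_dvd_pow h3
          have hpa : (p:ℤ) ∣ a := by
            have hd := dvd_sub h1 (Dvd.dvd.mul_right hpb b)
            rw [show (a^2+b^2) - b*b = a^2 from by ring] at hd
            exact hpP.dvd_of_dvd_pow hd
          exact hpab p hp hpa hpb))
    have cop13 : IsCoprime (a^2+b^2) (a^2+4*b^2) :=
      Int.isCoprime_iff_gcd_eq_one.mpr (gcd_eq_one_of_forall (by
        intro p hp h1 h2
        have hpP : Prime (p:ℤ) := Nat.prime_iff_prime_int.mp hp
        have hsub : (p:ℤ) ∣ 3*b^2 := by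
          have hd := dvd_sub h2 h1
          rwa [show (a^2+4*b^2) - (a^2+b^2) = 3*b^2 from by ring] at hd
        rcases hpP.dvd_mul.mp hsub with h3 | h3
        · have hp3 := eq_three_of_dvd hp h3
          subst hp3
          exact h3ab (three_dvd_sum_sq (by exact_mod_cast h1))
        · have hpb : (p:ℤ) ∣ b := hpP.dvd_of_dvd_pow h3
          have hpa : (p:ℤ) ∣ a := by
            have hd := dvd_sub h1 (Dvd.dvd.mul_right hpb b)
            rw [show (a^2+b^2) - b*b = a^2 from by ring] at hd
            exact hpP.dvd_of_dvd_pow hd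
          exact hpab p hp hpa hpb))
    have cop23 : IsCoprime (a^2-2*b^2) (a^2+4*b^2) :=
      Int.isCoprime_iff_gcd_eq_one.mpr (gcd_eq_one_of_forall (by
        intro p hp h1 h2
        have hpP : Prime (p:ℤ) := Nat.prime_iff_prime_int.mp hp
        have hsub : (p:ℤ) ∣ 6*b^2 := by
          have hd := dvd_sub h2 h1
          rwa [show (a^2+4*b^2) - (a^2-2*b^2) = 6*b^2 from by ring] at hd
        rcases hpP.dvd_mul.mp hsub with h3 | h3
        · have h6 : (p:ℤ) ∣ 2*3 := by norm_num; exact h3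
          rcases hpP.dvd_mul.mp h6 with h4 | h4
          · have hp2 : p = 2 := by
              have hle := Int.le_of_dvd (by norm_num) h4
              have := hp.two_le
              omega
            subst hp2
            have h2a : (2:ℤ) ∣ a^2 := by
              have hd := dvd_add h1 (dvd_mul_right (2:ℤ) (b^2))
              rwa [show (a^2-2*b^2) + 2*b^2 = a^2 from by ring] at hd
            exact odd_not_two_dvd hao (Int.prime_two.dvd_of_dvd_pow h2a)
          · have hp3 := eq_three_of_dvd hp h4
            subst hp3
            obtain ⟨h5, h6'⟩ := three_dvd_sub_sq (by exact_mod_cast h1)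
            exact h3ab ⟨h5, h6'⟩
        · have hpb : (p:ℤ) ∣ b := hpP.dvd_of_dvd_pow h3
          have hpa : (p:ℤ) ∣ a := by
            have hd := dvd_add h1 (Dvd.dvd.mul_left (dvd_pow hpb two_ne_zero) 2)
            rw [show (a^2-2*b^2) + 2*b^2 = a^2 from by ring] at hd
            exact hpP.dvd_of_dvd_pow hd
          exact hpab p hp hpa hpb))
    have hP1pos : (0:ℤ) < a^2+b^2 := by linarith [sq_nonneg a]
    have hP3pos : (0:ℤ) < a^2+4*b^2 := by linarith [sq_nonneg a]
    have hP2nn : (0:ℤ) ≤ a^2-2*b^2 := by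
      by_contra hcon
      push_neg at hcon
      have hneg : (a^2+b^2) * ((a^2-2*b^2)*(a^2+4*b^2)) < 0 :=
        mul_neg_of_pos_of_neg hP1pos (mul_neg_of_neg_of_pos hcon hP3pos)
      rw [← hfac] at hneg
      exact absurd hneg (not_lt.mpr (sq_nonneg c))
    obtain ⟨s, hs⟩ := sq_of_coprime' (cop12.mul_right cop13) hfac.symm (le_of_lt hP1pos)
    obtain ⟨t, ht⟩ := sq_of_coprime' (cop12.symm.mul_right cop23)
      (show (a^2-2*b^2) * ((a^2+b^2)*(a^2+4*b^2)) = c^2 by linear_combination -hfac) hP2nn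
    obtain ⟨u, hu⟩ := sq_of_coprime' (cop13.symm.mul_right cop23.symm)
      (show (a^2+4*b^2) * ((a^2+b^2)*(a^2-2*b^2)) = c^2 by linear_combination -hfac)
      (le_of_lt hP3pos)
    have heqd : s^4 = (t*u)^2 + 9*b^4 := by
      rw [show s^4 = (s^2)^2 from by ring, ← hs, mul_pow, ← ht, ← hu]
      ring
    have hgcdsb : Int.gcd s b = 1 := gcd_eq_one_of_forall (by
      intro p hp h1 h2
      have hpP : Prime (p:ℤ) := Nat.prime_iff_prime_int.mp hp
      have hpa : (p:ℤ) ∣ a := by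
        have hP1 : (p:ℤ) ∣ a^2+b^2 := by rw [hs]; exact dvd_pow h1 two_ne_zero
        have hd := dvd_sub hP1 (Dvd.dvd.mul_right h2 b)
        rw [show a^2+b^2 - b*b = a^2 from by ring] at hd
        exact hpP.dvd_of_dvd_pow hd
      exact hpab p hp hpa h2)
    exact no_x4_9y4 hb0 hgcdsb heqd

theorem stmt_16 : ¬ ∃ X Y : ℚ, Y ^ 2 = X ^ 6 + 3 * X ^ 4 - 6 * X ^ 2 - 8 := by
  rintro ⟨X, Y, hXY⟩
  have hXeq : X * ((X.den:ℚ)) = ((X.num:ℚ)) := by exact_mod_cast Rat.mul_den_eq_num X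
  have h1 : (Y * (X.den:ℚ)^3)^2
      = ((X.num^6 + 3*X.num^4*(X.den:ℤ)^2 - 6*X.num^2*(X.den:ℤ)^4 - 8*(X.den:ℤ)^6 : ℤ) : ℚ) := by
    push_cast
    have h2 : (Y * (X.den:ℚ)^3)^2 = (X^6+3*X^4-6*X^2-8) * (X.den:ℚ)^6 := by
      linear_combination ((X.den:ℚ))^6 * hXY
    rw [h2]
    linear_combination ((X*(X.den:ℚ))^5 + (X*(X.den:ℚ))^4*(X.num:ℚ) + (X*(X.den:ℚ))^3*(X.num:ℚ)^2
      + (X*(X.den:ℚ))^2*(X.num:ℚ)^3 + (X*(X.den:ℚ))*(X.num:ℚ)^4 + (X.num:ℚ)^5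
      + 3*(X.den:ℚ)^2*((X*(X.den:ℚ))^3 + (X*(X.den:ℚ))^2*(X.num:ℚ) + (X*(X.den:ℚ))*(X.num:ℚ)^2 + (X.num:ℚ)^3)
      - 6*(X.den:ℚ)^4*((X*(X.den:ℚ)) + (X.num:ℚ))) * hXeq
  obtain ⟨c, hc⟩ := rat_int_of_sq h1
  rw [hc] at h1
  have hceq : c^2 = X.num^6 + 3*X.num^4*(X.den:ℤ)^2 - 6*X.num^2*(X.den:ℤ)^4 - 8*(X.den:ℤ)^6 := by
    exact_mod_cast h1
  have hbpos : (0:ℤ) < (X.den:ℤ) := Int.natCast_pos.mpr X.den_pos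
  have hg : Int.gcd X.num (X.den:ℤ) = 1 := by
    have hred := X.reduced
    simpa [Int.gcd, Int.natAbs_natCast] using hred
  exact key_int X.num (X.den:ℤ) c hbpos hg hceq
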